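/- For a simplicial k-neighborly d-polytope with n ≥ d+2 vertices, the lower bound Σ_{i=0}^{k} (d+1−2i) · C(n−d−2+i, i) on the number of facets is at least d + k² + 1. -/

import Mathlib

lemma sum_arith_eq (d k : ℕ) (hd : 2 * k ≤ d) :
    ∑ i ∈ Finset.range (k + 1), (d + 1 - 2 * i) = (k + 1) * (d + 1 - k) := by
  induction k with
  | zero => simp
  | succ m ih =>
    rw [Finset.sum_range_succ, ih (by omega)]
    zify [show m ≤ d + 1 by omega, show 2 * (m + 1) ≤ d + 1 by omega,
      show m + 1 ≤ d + 1 by omega]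
    ring

/-- Σ_{i=0}^{k} (d+1−2i)·C(n−d−2+i, i) ≥ d + k² + 1
for d ≥ 2k, k ≥ 1, n ≥ d+2. -/
theorem facet_lower_bound (d k n : ℕ) (hk : 1 ≤ k) (hd : 2 * k ≤ d) (hn : d + 2 ≤ n) :
    d + k ^ 2 + 1 ≤ ∑ i ∈ Finset.range (k + 1), (d + 1 - 2 * i) * (n - d - 2 + i).choose i := by
  have h1 : ∑ i ∈ Finset.range (k + 1), (d + 1 - 2 * i)
      ≤ ∑ i ∈ Finset.range (k + 1), (d + 1 - 2 * i) * (n - d - 2 + i).choose i := by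
    refine Finset.sum_le_sum fun i _ => ?_
    have : 1 ≤ (n - d - 2 + i).choose i :=
      Nat.one_le_iff_ne_zero.mpr (Nat.choose_pos (Nat.le_add_left i _)).ne'
    nlinarith
  refine le_trans ?_ h1
  rw [sum_arith_eq d k hd]
  zify [show k ≤ d + 1 by omega]
  nlinarith
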